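/- Let L ⊆ sl₂(ℂ[λ]) be a Lie subalgebra of finite codimension, let H ⊆ L be a Lie subalgebra of finite codimension in L, and let h : H → L be a ℂ-linear map satisfying h([p₁,p₂]) = [h(p₁),p₂] = [p₁,h(p₂)] for all p₁, p₂ ∈ H. Then there exist polynomials p(λ), q(λ) ∈ ℂ[λ] with q ≠ 0 and a Lie subalgebra H̃ ⊆ H of finite codimension in H such that q(λ)·h(w) = p(λ)·w for all w ∈ H̃, where · denotes the ℂ[λ]-module multiplication on sl₂(ℂ[λ]). (This is the core content of the statement that the associative algebra Itw(L) of equivalence classes of such intertwining operators is commutative and isomorphic to the field of rational functions in λ.) -/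

import Mathlib

open Polynomial

noncomputable section StmtFourAux

abbrev Rp := Polynomial ℂ
abbrev Mat := Matrix (Fin 2) (Fin 2) Rp

namespace Stmt4Aux

def Eε : Mat := !![0,1;0,0]
def Fφ : Mat := !![0,0;1,0]
def Hη : Mat := !![1,0;0,-1]

lemma trace_Eε : Matrix.trace Eε = 0 := by simp [Eε, Matrix.trace_fin_two]
lemma trace_Fφ : Matrix.trace Fφ = 0 := by simp [Fφ, Matrix.trace_fin_two]
lemma trace_Hη : Matrix.trace Hη = 0 := by simp [Hη, Matrix.trace_fin_two]

set_option linter.unnecessarySeqFocus false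

lemma decomp (M : Mat) (hM : Matrix.trace M = 0) :
    M = M 0 1 • Eε + M 1 0 • Fφ + M 0 0 • Hη := by
  rw [Matrix.trace_fin_two] at hM
  refine Matrix.ext fun i j => ?_
  fin_cases i <;> fin_cases j <;>
    simp [Eε, Fφ, Hη, Matrix.add_apply, Matrix.smul_apply] <;> linear_combination hM

lemma braEF (a b : Rp) : (a • Eε) * (b • Fφ) - (b • Fφ) * (a • Eε) = (a*b) • Hη := by
  refine Matrix.ext fun i j => ?_
  fin_cases i <;> fin_cases j <;>
    (simp [Eε, Fφ, Hη, Matrix.mul_apply, Fin.sum_univ_two, Matrix.smul_apply, Matrix.sub_apply,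
      smul_eq_C_mul, map_ofNat]; try ring)

lemma braHE (a b : Rp) : (a • Hη) * (b • Eε) - (b • Eε) * (a • Hη) = (2:ℂ) • ((a*b) • Eε) := by
  refine Matrix.ext fun i j => ?_
  fin_cases i <;> fin_cases j <;>
    (simp [Eε, Fφ, Hη, Matrix.mul_apply, Fin.sum_univ_two, Matrix.smul_apply, Matrix.sub_apply,
      smul_eq_C_mul, map_ofNat]; try ring)

lemma braHF (a b : Rp) : (a • Hη) * (b • Fφ) - (b • Fφ) * (a • Hη) = (-2:ℂ) • ((a*b) • Fφ) := by
  refine Matrix.ext fun i j => ?_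
  fin_cases i <;> fin_cases j <;>
    (simp [Eε, Fφ, Hη, Matrix.mul_apply, Fin.sum_univ_two, Matrix.smul_apply, Matrix.sub_apply,
      smul_eq_C_mul, map_ofNat]; try ring)

lemma EE0 : Eε * Eε = 0 := by
  refine Matrix.ext fun i j => ?_
  fin_cases i <;> fin_cases j <;>
    simp [Eε, Matrix.mul_apply, Fin.sum_univ_two]

lemma FF0 : Fφ * Fφ = 0 := by
  refine Matrix.ext fun i j => ?_
  fin_cases i <;> fin_cases j <;>
    simp [Fφ, Matrix.mul_apply, Fin.sum_univ_two]

lemma comm_Eε (M : Mat) (hM : Matrix.trace M = 0)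
    (h : M * Eε - Eε * M = 0) : M = M 0 1 • Eε := by
  rw [Matrix.trace_fin_two] at hM
  rw [sub_eq_zero] at h
  have key : ∀ i j, (M * Eε) i j = (Eε * M) i j := fun i j => by rw [h]
  have h00 := key 0 0
  have h01 := key 0 1
  simp [Eε, Matrix.mul_apply, Fin.sum_univ_two] at h00 h01
  have e00 : M 0 0 = 0 := by
    have h2 : (2:Rp) * M 0 0 = 0 := by linear_combination hM + h01
    rcases mul_eq_zero.1 h2 with h' | h'
    · exact absurd h' two_ne_zero
    · exact h'
  have e11 : M 1 1 = 0 := by rw [← h01, e00]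
  refine Matrix.ext fun i j => ?_
  fin_cases i <;> fin_cases j <;> simp [Eε, Matrix.smul_apply, e00, e11, ← h00]

lemma comm_Fφ (M : Mat) (hM : Matrix.trace M = 0)
    (h : M * Fφ - Fφ * M = 0) : M = M 1 0 • Fφ := by
  rw [Matrix.trace_fin_two] at hM
  rw [sub_eq_zero] at h
  have key : ∀ i j, (M * Fφ) i j = (Fφ * M) i j := fun i j => by rw [h]
  have h00 := key 0 0
  have h10 := key 1 0
  simp [Fφ, Matrix.mul_apply, Fin.sum_univ_two] at h00 h10
  have e00 : M 0 0 = 0 := by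
    have h2 : (2:Rp) * M 0 0 = 0 := by linear_combination hM - h10
    rcases mul_eq_zero.1 h2 with h' | h'
    · exact absurd h' two_ne_zero
    · exact h'
  have e11 : M 1 1 = 0 := by
    have := hM; rw [e00, zero_add] at this; exact this
  refine Matrix.ext fun i j => ?_
  fin_cases i <;> fin_cases j <;> simp [Fφ, Matrix.smul_apply, e00, e11, h00]

lemma smulmul (a b : Rp) (A B : Mat) : (a • A) * (b • B) = (a*b) • (A * B) := by
  rw [Matrix.smul_mul, Matrix.mul_smul, smul_smul]

lemma smul_cancel {F : Rp} (hF : F ≠ 0) {N : Mat} (h : F • N = 0) : N = 0 := by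
  refine Matrix.ext fun i j => ?_
  have := congrFun (congrFun h i) j
  simp only [Matrix.smul_apply, Matrix.zero_apply, smul_eq_mul] at this
  rcases mul_eq_zero.1 this with h' | h'
  · exact absurd h' hF
  · simpa using h'

lemma entry_Hη (c c' : Rp) (h : c • Hη = c' • Hη) : c = c' := by
  have := congrFun (congrFun h 0) 0
  simpa [Hη, Matrix.smul_apply] using this

/-- finite dimensionality assembles from a submodule and its quotient -/
lemma fd_of_sub_quot {V : Type*} [AddCommGroup V] [Module ℂ V] (S : Submodule ℂ V)
    (h1 : FiniteDimensional ℂ S) (h2 : FiniteDimensional ℂ (V ⧸ S)) :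
    FiniteDimensional ℂ V :=
  IsNoetherian.iff_fg.1 <| (isNoetherian_iff_submodule_quotient S).2
    ⟨IsNoetherian.iff_fg.2 h1, IsNoetherian.iff_fg.2 h2⟩

lemma fd_degreeLT (n : ℕ) : FiniteDimensional ℂ (Polynomial.degreeLT ℂ n) :=
  LinearEquiv.finiteDimensional (Polynomial.degreeLTEquiv ℂ n).symm

/-- codimensions compose along an embedding -/
lemma codim_trans {V W : Type*} [AddCommGroup V] [Module ℂ V] [AddCommGroup W] [Module ℂ W]
    (i : W →ₗ[ℂ] V) (h1 : FiniteDimensional ℂ (V ⧸ LinearMap.range i))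
    (A : Submodule ℂ W) (h2 : FiniteDimensional ℂ (W ⧸ A)) :
    FiniteDimensional ℂ (V ⧸ A.map i) := by
  set A' : Submodule ℂ V := A.map i
  have hle : A' ≤ LinearMap.range i := by
    rintro x ⟨w, _, rfl⟩; exact ⟨w, rfl⟩
  have houter : FiniteDimensional ℂ ((V ⧸ A') ⧸ (LinearMap.range i).map A'.mkQ) :=
    LinearEquiv.finiteDimensional
      (Submodule.quotientQuotientEquivQuotient A' (LinearMap.range i) hle).symm
  have hker : A ≤ LinearMap.ker (A'.mkQ ∘ₗ i) := by
    intro a ha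
    simp only [LinearMap.mem_ker, LinearMap.comp_apply, Submodule.mkQ_apply,
      Submodule.Quotient.mk_eq_zero]
    exact Submodule.mem_map_of_mem ha
  have hrange : LinearMap.range (Submodule.liftQ A (A'.mkQ ∘ₗ i) hker)
      = (LinearMap.range i).map A'.mkQ := by
    rw [Submodule.range_liftQ, LinearMap.range_comp]
  have hmid : FiniteDimensional ℂ ((LinearMap.range i).map A'.mkQ) := by
    rw [← hrange]
    exact LinearMap.finiteDimensional_range _
  exact fd_of_sub_quot _ hmid houter

/-- a finite-codimension subspace of `ℂ[λ]` contains a monic polynomial of positive degree -/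
lemma exists_monic (K : Submodule ℂ Rp) (hK : FiniteDimensional ℂ (Rp ⧸ K)) :
    ∃ g ∈ K, g.Monic ∧ 1 ≤ g.natDegree := by
  by_contra hcon
  push_neg at hcon
  have hconst : ∀ g ∈ K, g.natDegree = 0 := by
    intro g hg
    by_contra hd
    have h1 : 1 ≤ g.natDegree := Nat.one_le_iff_ne_zero.2 hd
    have hg0 : g ≠ 0 := fun h => by simp [h] at h1
    have hmem : g * C (g.leadingCoeff)⁻¹ ∈ K := by
      have heq : g * C (g.leadingCoeff)⁻¹ = (g.leadingCoeff)⁻¹ • g := by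
        rw [smul_eq_C_mul]; ring
      rw [heq]; exact K.smul_mem _ hg
    have hmon : (g * C (g.leadingCoeff)⁻¹).Monic := monic_mul_leadingCoeff_inv hg0
    have hdeg : 1 ≤ (g * C (g.leadingCoeff)⁻¹).natDegree := by
      rw [natDegree_mul hg0 (by simp [leadingCoeff_ne_zero.2 hg0]), natDegree_C, add_zero]
      exact h1
    exact absurd hdeg (not_le.2 (hcon _ hmem hmon))
  have hKle : K ≤ Polynomial.degreeLT ℂ 1 := by
    intro g hg
    rw [Polynomial.mem_degreeLT]
    rcases eq_or_ne g 0 with rfl | hg0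
    · rw [degree_zero]; exact bot_lt_iff_ne_bot.mpr (by exact_mod_cast (WithBot.coe_ne_bot))
    · rw [degree_eq_natDegree hg0, hconst g hg]; exact_mod_cast zero_lt_one
  have h1 : FiniteDimensional ℂ K := by
    haveI := fd_degreeLT 1; exact Submodule.finiteDimensional_of_le hKle
  exact Polynomial.not_finite (fd_of_sub_quot K h1 hK)

/-- a multiplicatively closed subspace of finite codimension in `ℂ[λ]` contains a
nonzero ideal -/
lemma exists_ideal (K : Submodule ℂ Rp) (hK : FiniteDimensional ℂ (Rp ⧸ K))
    (hmul : ∀ a ∈ K, ∀ b ∈ K, a * b ∈ K) :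
    ∃ F : Rp, F.Monic ∧ ∀ x : Rp, F * x ∈ K := by
  obtain ⟨g, hgK, hgmon, hgdeg⟩ := exists_monic K hK
  have hle : K ≤ K.comap (LinearMap.mulLeft ℂ g) := fun x hx => hmul g hgK x hx
  set M : Module.End ℂ (Rp ⧸ K) := Submodule.mapQ K K (LinearMap.mulLeft ℂ g) hle with hMdef
  have hMapp : ∀ x : Rp, M (K.mkQ x) = K.mkQ (g * x) := by
    intro x; rw [hMdef, Submodule.mkQ_apply, Submodule.mapQ_apply, LinearMap.mulLeft_apply]; rfl
  have hMpow : ∀ (n : ℕ) (x : Rp), (M ^ n) (K.mkQ x) = K.mkQ (g ^ n * x) := by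
    intro n
    induction n with
    | zero => intro x; simp
    | succ n ih =>
      intro x
      rw [pow_succ, Module.End.mul_apply, hMapp, ih]
      congr 1; ring
  have haeval : ∀ (c : Polynomial ℂ) (x : Rp),
      (Polynomial.aeval M c) (K.mkQ x) = K.mkQ ((Polynomial.aeval g c) * x) := by
    intro c
    induction c using Polynomial.induction_on' with
    | add p q hp hq =>
      intro x
      rw [map_add, map_add, LinearMap.add_apply, hp, hq, add_mul, map_add]
    | monomial n a =>
      intro x
      rw [Polynomial.aeval_monomial, Polynomial.aeval_monomial, Module.End.mul_apply, hMpow,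
        Module.algebraMap_end_apply, ← map_smul]
      congr 1
      rw [Polynomial.algebraMap_eq, smul_eq_C_mul]; ring
  haveI := hK
  have hInt : IsIntegral ℂ M := IsIntegral.of_finite ℂ M
  have hmonic : (minpoly ℂ M).Monic := minpoly.monic hInt
  have hzero : Polynomial.aeval M (minpoly ℂ M) = 0 := minpoly.aeval ℂ M
  have hcomp : Polynomial.aeval g (minpoly ℂ M) = (minpoly ℂ M).comp g := by
    rw [Polynomial.aeval_def, Polynomial.comp, Polynomial.algebraMap_eq]
  refine ⟨Polynomial.aeval g (minpoly ℂ M), ?_, ?_⟩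
  · rw [hcomp]
    have hlc : ((minpoly ℂ M).comp g).leadingCoeff = 1 := by
      rw [Polynomial.leadingCoeff_comp (by omega)]
      simp [hmonic.leadingCoeff, hgmon.leadingCoeff]
    exact hlc
  · intro x
    have h0 : (Polynomial.aeval M (minpoly ℂ M)) (K.mkQ x) = 0 := by rw [hzero]; rfl
    rw [haeval] at h0
    rwa [Submodule.mkQ_apply, Submodule.Quotient.mk_eq_zero] at h0

/-- the quotient of `ℂ[λ]` by a principal ideal with monic generator is
finite-dimensional over `ℂ` -/
lemma fd_quot_span (F : Rp) (hF : F.Monic) :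
    FiniteDimensional ℂ (Rp ⧸ (Submodule.restrictScalars ℂ (Ideal.span {F}))) := by
  set I : Submodule ℂ Rp := Submodule.restrictScalars ℂ (Ideal.span {F})
  set d := F.natDegree
  have hsurj : Function.Surjective (I.mkQ ∘ₗ (Polynomial.degreeLT ℂ d).subtype) := by
    intro y
    obtain ⟨x, rfl⟩ := Submodule.mkQ_surjective I y
    refine ⟨⟨x %ₘ F, ?_⟩, ?_⟩
    · rw [Polynomial.mem_degreeLT]
      exact lt_of_lt_of_le (Polynomial.degree_modByMonic_lt x hF) Polynomial.degree_le_natDegree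
    · simp only [LinearMap.comp_apply, Submodule.subtype_apply, Submodule.mkQ_apply]
      rw [Submodule.Quotient.eq]
      have heq : x %ₘ F - x = -(F * (x /ₘ F)) := by
        have h := Polynomial.modByMonic_add_div x F
        linear_combination h
      rw [heq]
      exact neg_mem (Submodule.restrictScalars_mem _ _ _ |>.2
        (Ideal.mem_span_singleton.2 ⟨x /ₘ F, rfl⟩))
  haveI := fd_degreeLT d
  exact Module.Finite.of_surjective (M := Polynomial.degreeLT ℂ d) (P := Rp ⧸ I) _ hsurj

end Stmt4Aux

end StmtFourAux

attribute [local instance 100] LieRing.ofAssociativeRing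

/-- The Lie algebra `sl₂(ℂ[λ])` of traceless `2×2` matrices over the polynomial ring `ℂ[λ]`,
regarded as a Lie algebra over `ℂ`. -/
noncomputable def sl2Poly : LieSubalgebra ℂ (Matrix (Fin 2) (Fin 2) (Polynomial ℂ)) where
  carrier := {A | Matrix.trace A = 0}
  add_mem' := fun {a b} ha hb => by
    simp only [Set.mem_setOf_eq, Matrix.trace_add] at *
    rw [ha, hb, add_zero]
  zero_mem' := by simp
  smul_mem' := fun c a ha => by
    simp only [Set.mem_setOf_eq, Matrix.trace_smul] at *
    rw [ha, smul_zero]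
  lie_mem' := fun {a b} _ _ => by
    show Matrix.trace ⁅a, b⁆ = 0
    rw [Ring.lie_def, Matrix.trace_sub, Matrix.trace_mul_comm, sub_self]

namespace Stmt4Aux

lemma mem_sl2 (A : Mat) : A ∈ sl2Poly ↔ Matrix.trace A = 0 := Iff.rfl

/-- inclusion of scalar multiples of a fixed traceless matrix into `sl2Poly` -/
noncomputable def sl2elt (B : Mat) (hB : Matrix.trace B = 0) : Rp →ₗ[ℂ] sl2Poly where
  toFun a := ⟨a • B, by rw [mem_sl2, Matrix.trace_smul, hB, smul_zero]⟩
  map_add' a b := by ext : 1; simp [add_smul]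
  map_smul' c a := by
    refine Subtype.ext ?_
    show (c • a) • B = c • (a • B)
    rw [smul_assoc]

end Stmt4Aux

set_option maxHeartbeats 16000000 in
set_option synthInstance.maxHeartbeats 1000000 in
open Stmt4Aux in
theorem stmt_4
    (L : LieSubalgebra ℂ sl2Poly)
    (hL : FiniteDimensional ℂ (sl2Poly ⧸ L.toSubmodule))
    (H : LieSubalgebra ℂ L)
    (hH : FiniteDimensional ℂ (L ⧸ H.toSubmodule))
    (h : H →ₗ[ℂ] L)
    (hint : ∀ p₁ p₂ : H, h ⁅p₁, p₂⁆ = ⁅h p₁, (p₂ : L)⁆ ∧ h ⁅p₁, p₂⁆ = ⁅(p₁ : L), h p₂⁆) :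
    ∃ p q : Polynomial ℂ, q ≠ 0 ∧
      ∃ H' : LieSubalgebra ℂ H, FiniteDimensional ℂ (H ⧸ H'.toSubmodule) ∧
        ∀ w : H, w ∈ H' →
          q • (((h w : L) : sl2Poly) : Matrix (Fin 2) (Fin 2) (Polynomial ℂ))
            = p • (((w : L) : sl2Poly) : Matrix (Fin 2) (Fin 2) (Polynomial ℂ)) := by
  classical
  -- inclusion maps
  set jL : L →ₗ[ℂ] Mat := (sl2Poly.toSubmodule.subtype).comp (L.toSubmodule.subtype) with hjL
  set j : H →ₗ[ℂ] Mat := jL.comp (H.toSubmodule.subtype) with hjdef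
  have hinj : Function.Injective j := fun a b hab =>
    Subtype.ext (Subtype.ext (Subtype.ext hab))
  have htr : ∀ x : L, Matrix.trace (jL x) = 0 := fun x => ((x : sl2Poly)).2
  have jLbrak : ∀ x y : L, jL ⁅x, y⁆ = jL x * jL y - jL y * jL x := by
    intro x y
    show ((((⁅x,y⁆ : L) : sl2Poly)) : Mat) = _
    rw [LieSubalgebra.coe_bracket, LieSubalgebra.coe_bracket, Ring.lie_def]
    rfl
  have jbrak : ∀ w w' : H, j ⁅w, w'⁆ = j w * j w' - j w' * j w := by
    intro w w'
    show jL ((⁅w,w'⁆ : H) : L) = _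
    rw [LieSubalgebra.coe_bracket, jLbrak]
    rfl
  -- the image of H inside sl2Poly, resp. inside matrices
  set Hs : Submodule ℂ sl2Poly := Submodule.map L.toSubmodule.subtype H.toSubmodule with hHsdef
  set Hm : Submodule ℂ Mat := LinearMap.range j with hHmdef
  have memHm : ∀ x : sl2Poly, x ∈ Hs ↔ (x : Mat) ∈ Hm := by
    intro x
    constructor
    · rintro ⟨y, hy, rfl⟩
      exact ⟨⟨y, hy⟩, rfl⟩
    · rintro ⟨w, hw⟩
      exact ⟨(w : L), w.2, Subtype.ext hw⟩
  have Hm_comm : ∀ x y : Mat, x ∈ Hm → y ∈ Hm → x * y - y * x ∈ Hm := by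
    rintro x y ⟨w₁, rfl⟩ ⟨w₂, rfl⟩
    exact ⟨⁅w₁, w₂⁆, jbrak w₁ w₂⟩
  -- H has finite codimension in sl2Poly
  have fdHs : FiniteDimensional ℂ (sl2Poly ⧸ Hs) := by
    have h1 : FiniteDimensional ℂ (sl2Poly ⧸ LinearMap.range (L.toSubmodule.subtype)) := by
      rw [Submodule.range_subtype]; exact hL
    exact codim_trans L.toSubmodule.subtype h1 H.toSubmodule hH
  -- the subspace K of coefficients
  set Φ : Rp →ₗ[ℂ] ((sl2Poly ⧸ Hs) × ((sl2Poly ⧸ Hs) × (sl2Poly ⧸ Hs))) :=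
    (Hs.mkQ ∘ₗ sl2elt Eε trace_Eε).prod
      ((Hs.mkQ ∘ₗ sl2elt Fφ trace_Fφ).prod (Hs.mkQ ∘ₗ sl2elt Hη trace_Hη)) with hΦdef
  set K : Submodule ℂ Rp := LinearMap.ker Φ with hKdef
  have memK : ∀ a : Rp, a ∈ K ↔ (a • Eε ∈ Hm ∧ a • Fφ ∈ Hm ∧ a • Hη ∈ Hm) := by
    intro a
    rw [hKdef, LinearMap.mem_ker, hΦdef]
    simp only [LinearMap.prod_apply, LinearMap.comp_apply, Function.prod, Prod.mk_eq_zero,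
      Submodule.mkQ_apply, Submodule.Quotient.mk_eq_zero]
    rw [memHm, memHm, memHm]
    rfl
  have fdK : FiniteDimensional ℂ (Rp ⧸ K) :=
    LinearEquiv.finiteDimensional (LinearMap.quotKerEquivRange Φ).symm
  have Kmul : ∀ a ∈ K, ∀ b ∈ K, a * b ∈ K := by
    intro a ha b hb
    rw [memK] at ha hb ⊢
    obtain ⟨haE, haF, haH⟩ := ha
    obtain ⟨hbE, hbF, hbH⟩ := hb
    refine ⟨?_, ?_, ?_⟩
    · have hcomm := Hm_comm _ _ haH hbE
      have : (a*b) • Eε = (2⁻¹:ℂ) • ((a • Hη) * (b • Eε) - (b • Eε) * (a • Hη)) := by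
        rw [braHE, smul_smul]; norm_num
      rw [this]
      exact Hm.smul_mem _ hcomm
    · have hcomm := Hm_comm _ _ haH hbF
      have : (a*b) • Fφ = (-2⁻¹:ℂ) • ((a • Hη) * (b • Fφ) - (b • Fφ) * (a • Hη)) := by
        rw [braHF, smul_smul]; norm_num
      rw [this]
      exact Hm.smul_mem _ hcomm
    · have hcomm := Hm_comm _ _ haE hbF
      rw [← braEF]
      exact hcomm
  -- the ideal
  obtain ⟨F, hFmon, hFK⟩ := exists_ideal K fdK Kmul
  have hF0 : F ≠ 0 := hFmon.ne_zero
  -- witnesses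
  have hWit : ∀ B : Mat, Matrix.trace B = 0 → ∃ w : H, j w = F • B := by
    intro B hB
    have hmem : F • B ∈ Hm := by
      rw [decomp B hB, smul_add, smul_add, smul_smul, smul_smul, smul_smul]
      have h1 := ((memK _).1 (hFK (B 0 1))).1
      have h2 := ((memK _).1 (hFK (B 1 0))).2.1
      have h3 := ((memK _).1 (hFK (B 0 0))).2.2
      exact Hm.add_mem (Hm.add_mem h1 h2) h3
    exact hmem
  obtain ⟨wE, hwE⟩ := hWit Eε trace_Eε
  obtain ⟨wΦ, hwΦ⟩ := hWit Fφ trace_Fφ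
  -- structure of h on multiples of Eε
  have Xstruct : ∀ (w : H) (c : Rp), j w = c • Eε →
      ∃ α : Rp, jL (h w) = α • Eε := by
    intro w c hw
    have hb0 : j ⁅w, wE⁆ = 0 := by
      rw [jbrak, hw, hwE, smulmul, smulmul, EE0, smul_zero, smul_zero, sub_zero]
    have hz : ⁅w, wE⁆ = 0 := by
      apply hinj
      rw [hb0, map_zero]
    have hL0 : ⁅h w, (wE : L)⁆ = 0 := by
      rw [← (hint w wE).1, hz, map_zero]
    have hm0 : jL (h w) * (F • Eε) - (F • Eε) * jL (h w) = 0 := by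
      have := congrArg jL hL0
      rw [jLbrak, map_zero] at this
      rw [show jL ((wE : L)) = j wE from rfl, hwE] at this
      exact this
    have hm1 : F • (jL (h w) * Eε - Eε * jL (h w)) = 0 := by
      rw [smul_sub, ← Matrix.mul_smul, ← Matrix.smul_mul]
      exact hm0
    have hcomm := smul_cancel hF0 hm1
    exact ⟨(jL (h w)) 0 1, comm_Eε _ (htr (h w)) hcomm⟩
  have Ystruct : ∀ (w : H) (c : Rp), j w = c • Fφ →
      ∃ β : Rp, jL (h w) = β • Fφ := by
    intro w c hw
    have hb0 : j ⁅w, wΦ⁆ = 0 := by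
      rw [jbrak, hw, hwΦ, smulmul, smulmul, FF0, smul_zero, smul_zero, sub_zero]
    have hz : ⁅w, wΦ⁆ = 0 := by
      apply hinj
      rw [hb0, map_zero]
    have hL0 : ⁅h w, (wΦ : L)⁆ = 0 := by
      rw [← (hint w wΦ).1, hz, map_zero]
    have hm0 : jL (h w) * (F • Fφ) - (F • Fφ) * jL (h w) = 0 := by
      have := congrArg jL hL0
      rw [jLbrak, map_zero] at this
      rw [show jL ((wΦ : L)) = j wΦ from rfl, hwΦ] at this
      exact this
    have hm1 : F • (jL (h w) * Fφ - Fφ * jL (h w)) = 0 := by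
      rw [smul_sub, ← Matrix.mul_smul, ← Matrix.smul_mul]
      exact hm0
    have hcomm := smul_cancel hF0 hm1
    exact ⟨(jL (h w)) 1 0, comm_Fφ _ (htr (h w)) hcomm⟩
  -- the pairing identity
  have pairing : ∀ (w w' : H) (a b α β : Rp), j w = a • Eε → j w' = b • Fφ →
      jL (h w) = α • Eε → jL (h w') = β • Fφ → α * b = a * β := by
    intro w w' a b α β hw hw' hα hβ
    have hEq : ⁅h w, (w' : L)⁆ = ⁅(w : L), h w'⁆ := by
      rw [← (hint w w').1, (hint w w').2]
    have := congrArg jL hEq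
    rw [jLbrak, jLbrak] at this
    rw [show jL ((w' : L)) = j w' from rfl, show jL ((w : L)) = j w from rfl] at this
    rw [hw, hw', hα, hβ, braEF, braEF] at this
    exact entry_Hη _ _ this
  -- define p via h(wE)
  obtain ⟨p, hp⟩ := Xstruct wE F hwE
  obtain ⟨βΦ, hβΦ⟩ := Ystruct wΦ F hwΦ
  have hpβ : p * F = F * βΦ := pairing wE wΦ F F p βΦ hwE hwΦ hp hβΦ
  -- the subalgebra H'
  set Hsub : Submodule ℂ H :=
    { carrier := {w : H | ∀ i k : Fin 2, F^2 ∣ (j w) i k}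
      add_mem' := fun {w w'} hw hw' i k => by
        rw [map_add, Matrix.add_apply]; exact dvd_add (hw i k) (hw' i k)
      zero_mem' := fun i k => by rw [map_zero]; exact dvd_zero _
      smul_mem' := fun c w hw i k => by
        rw [map_smul, Matrix.smul_apply, smul_eq_C_mul]
        exact (hw i k).mul_left _ } with hHsubdef
  have Hsub_lie : ∀ {w w' : H}, w ∈ Hsub → w' ∈ Hsub → ⁅w, w'⁆ ∈ Hsub := by
    intro w w' hw hw' i k
    rw [jbrak, Matrix.sub_apply, Matrix.mul_apply, Matrix.mul_apply]
    refine dvd_sub (Finset.dvd_sum fun x _ => ?_) (Finset.dvd_sum fun x _ => ?_)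
    · exact (hw i x).mul_right _
    · exact ((hw' i x)).mul_right _
  set H' : LieSubalgebra ℂ H := { Hsub with lie_mem' := fun hw hw' => Hsub_lie hw hw' }
    with hH'def
  refine ⟨p, F, hF0, H', ?_, ?_⟩
  · -- finite codimension of H' in H
    set Ift : Submodule ℂ Rp := Submodule.restrictScalars ℂ (Ideal.span {F^2}) with hIft
    haveI fdq : FiniteDimensional ℂ (Rp ⧸ Ift) := fd_quot_span (F^2) (hFmon.pow _)
    set ent : Fin 2 → Fin 2 → (Mat →ₗ[ℂ] Rp) := fun i k =>
      { toFun := fun M => M i k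
        map_add' := fun M N => rfl
        map_smul' := fun c M => rfl } with hent
    set Θ : H →ₗ[ℂ] (Fin 2 → Fin 2 → (Rp ⧸ Ift)) :=
      LinearMap.pi (fun i => LinearMap.pi (fun k => Ift.mkQ ∘ₗ (ent i k) ∘ₗ j)) with hΘ
    have hker : LinearMap.ker Θ = H'.toSubmodule := by
      ext w
      simp only [LinearMap.mem_ker, hΘ, LinearMap.pi_apply, LinearMap.comp_apply]
      constructor
      · intro hz i k
        have h2 := congrFun (congrFun hz i) k
        simp only [hΘ, LinearMap.pi_apply, LinearMap.comp_apply, Pi.zero_apply,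
          Submodule.mkQ_apply, Submodule.Quotient.mk_eq_zero] at h2
        exact Ideal.mem_span_singleton.1 h2
      · intro hw
        funext i k
        simp only [hΘ, LinearMap.pi_apply, LinearMap.comp_apply, Pi.zero_apply,
          Submodule.mkQ_apply, Submodule.Quotient.mk_eq_zero]
        exact Ideal.mem_span_singleton.2 (hw i k)
    haveI fdq2 : FiniteDimensional ℂ (H ⧸ LinearMap.ker Θ) :=
      LinearEquiv.finiteDimensional (LinearMap.quotKerEquivRange Θ).symm
    exact LinearEquiv.finiteDimensional (Submodule.quotEquivOfEq _ _ hker)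
  · -- the intertwining identity on H'
    intro w hw
    have hw : ∀ i k : Fin 2, F^2 ∣ (j w) i k := hw
    obtain ⟨d1, hd1⟩ := hw 0 1
    obtain ⟨d2, hd2⟩ := hw 1 0
    obtain ⟨d3, hd3⟩ := hw 0 0
    -- components
    obtain ⟨w₁, hw₁⟩ := hWit ((F * d1) • Eε)
      (by rw [Matrix.trace_smul, trace_Eε, smul_zero])
    obtain ⟨w₂, hw₂⟩ := hWit ((F * d2) • Fφ)
      (by rw [Matrix.trace_smul, trace_Fφ, smul_zero])
    obtain ⟨v, hv⟩ := hWit (d3 • Fφ)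
      (by rw [Matrix.trace_smul, trace_Fφ, smul_zero])
    have hjw₁ : j w₁ = (j w 0 1) • Eε := by rw [hw₁, smul_smul, hd1]; ring_nf
    have hjw₂ : j w₂ = (j w 1 0) • Fφ := by rw [hw₂, smul_smul, hd2]; ring_nf
    set w₃ : H := ⁅wE, v⁆ with hw₃def
    have hjw₃ : j w₃ = (j w 0 0) • Hη := by
      rw [hw₃def, jbrak, hwE, hv, smul_smul]
      have := braEF F (F * d3)
      rw [this, hd3]; ring_nf
    -- w decomposes
    have hsplit : w = w₁ + w₂ + w₃ := by
      apply hinj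
      rw [map_add, map_add, hjw₁, hjw₂, hjw₃]
      exact decomp (j w) (htr (w : L))
    -- h on components
    obtain ⟨α₁, hα₁⟩ := Xstruct w₁ (j w 0 1) hjw₁
    obtain ⟨β₂, hβ₂⟩ := Ystruct w₂ (j w 1 0) hjw₂
    have e1 : α₁ * F = (j w 0 1) * βΦ := pairing w₁ wΦ _ F α₁ βΦ hjw₁ hwΦ hα₁ hβΦ
    have e2 : p * (j w 1 0) = F * β₂ := pairing wE w₂ F _ p β₂ hwE hjw₂ hp hβ₂
    -- piece 1
    have k1 : F • jL (h w₁) = p • ((j w 0 1) • Eε) := by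
      rw [hα₁, smul_smul, smul_smul]
      congr 1
      have key : F * (F * α₁ - p * (j w 0 1)) = 0 := by
        linear_combination F * e1 - (j w 0 1) * hpβ
      rcases mul_eq_zero.1 key with h' | h'
      · exact absurd h' hF0
      · linear_combination h'
    -- piece 2
    have k2 : F • jL (h w₂) = p • ((j w 1 0) • Fφ) := by
      rw [hβ₂, smul_smul, smul_smul]
      congr 1
      linear_combination -e2
    -- piece 3
    have k3 : F • jL (h w₃) = p • ((j w 0 0) • Hη) := by
      have hhw₃ : jL (h w₃) = (p * (F * d3)) • Hη := by
        have := congrArg jL ((hint wE v).1)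
        rw [jLbrak] at this
        rw [hw₃def, this, show jL ((v : L)) = j v from rfl, hp, hv, smul_smul, braEF]
      rw [hhw₃, smul_smul, smul_smul, hd3]
      congr 1
      ring
    -- assemble
    show F • jL (h w) = p • j w
    rw [hsplit, map_add, map_add, map_add, map_add, smul_add, smul_add, k1, k2, k3,
      ← smul_add, ← smul_add, ← hjw₁, ← hjw₂, ← hjw₃, ← map_add, ← map_add, ← hsplit]
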